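/- Let (𝒮,d) be a Busemann surface, let δ > 0, and let x, x', w, v be four points in convex position (none of the four points lies in the convex hull of the other three) with d(x,x') ≤ 2δ, d(x',w) ≤ 2δ, d(w,v) ≤ 2δ, and d(v,x) ≤ 2δ. Let p, q, r, s be the midpoints of the geodesic segments [x,x'], [x',w], [w,v], [v,x], respectively. Then the convex hull of {x, x', w, v} is contained in B_δ(p) ∪ B_δ(q) ∪ B_δ(r) ∪ B_δ(s); in particular it can be covered by 4 closed balls of radius δ. -/

import Mathlib

open Metric Set

section Defs

variable {X : Type*} [MetricSpace X]

/-- `γ` is a geodesic parametrized by arclength on the interval `[0, l]`. -/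
def IsGeodesicMap (γ : ℝ → X) (l : ℝ) : Prop :=
  ∀ s ∈ Set.Icc (0 : ℝ) l, ∀ t ∈ Set.Icc (0 : ℝ) l, dist (γ s) (γ t) = |s - t|

/-- A geodesic metric space: every pair of points is joined by a geodesic. -/
def IsGeodesicSpace (X : Type*) [MetricSpace X] : Prop :=
  ∀ x y : X, ∃ γ : ℝ → X, IsGeodesicMap γ (dist x y) ∧ γ 0 = x ∧ γ (dist x y) = y

/-- A Busemann space: a geodesic metric space in which the distance between
any two (affinely reparametrized) geodesics is convex. -/
def IsBusemannSpace (X : Type*) [MetricSpace X] : Prop :=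
  IsGeodesicSpace X ∧
    ∀ (γ γ' : ℝ → X) (l l' : ℝ), 0 ≤ l → 0 ≤ l' →
      IsGeodesicMap γ l → IsGeodesicMap γ' l' →
        ∀ t ∈ Set.Icc (0 : ℝ) 1,
          dist (γ (t * l)) (γ' (t * l')) ≤
            (1 - t) * dist (γ 0) (γ' 0) + t * dist (γ l) (γ' l')

/-- A Busemann surface: a Busemann space homeomorphic to the Euclidean plane. -/
def IsBusemannSurface (X : Type*) [MetricSpace X] : Prop :=
  IsBusemannSpace X ∧ Nonempty (X ≃ₜ EuclideanSpace ℝ (Fin 2))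

/-- The covering number `ρ_δ(S)`: the least number of closed balls of radius `δ`
(centered at arbitrary points of `X`) needed to cover `S`. -/
noncomputable def covNum (δ : ℝ) (S : Set X) : ℕ∞ :=
  sInf {n : ℕ∞ | ∃ T : Set X, T.encard = n ∧ S ⊆ ⋃ x ∈ T, Metric.closedBall x δ}

/-- The packing number `ν_δ(S)`: the largest cardinality of a subset `P ⊆ S`
whose points are pairwise at distance `> 2δ`. -/
noncomputable def packNum (δ : ℝ) (S : Set X) : ℕ∞ :=
  sSup {n : ℕ∞ | ∃ P : Set X, P ⊆ S ∧ P.encard = n ∧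
    P.Pairwise fun p q => 2 * δ < dist p q}

/-- The geodesic segment `[x,y]` in a (uniquely geodesic) metric space. -/
def seg (x y : X) : Set X := {z | dist x z + dist z y = dist x y}

/-- A set is (geodesically) convex if it contains the segment between any two of its points. -/
def GConvex (C : Set X) : Prop := ∀ x ∈ C, ∀ y ∈ C, seg x y ⊆ C

/-- The (geodesic) convex hull of a set. -/
def gHull (Q : Set X) : Set X := ⋂₀ {C : Set X | GConvex C ∧ Q ⊆ C}

/-- The triangle `Δ(x,y,z)`: the convex hull of `{x,y,z}`. -/
def triangleG (x y z : X) : Set X := gHull {x, y, z}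

/-- The perimeter `π(a,b,c)` of a triangle. -/
def perim (a b c : X) : ℝ := dist a b + dist b c + dist c a

/-- Three points are collinear if one lies on the geodesic segment between the other two. -/
def CollinearPts (a b c : X) : Prop := b ∈ seg a c ∨ a ∈ seg b c ∨ c ∈ seg a b

/-- A geodesic line: the image of an isometric embedding of `ℝ`. -/
def IsGeodesicLine (L : Set X) : Prop := ∃ γ : ℝ → X, Isometry γ ∧ L = Set.range γ

/-- A closed halfplane determined by the line `L`: the union of `L` with a
connected component of its complement. -/
def IsHalfplane (L H : Set X) : Prop :=
  ∃ p, p ∉ L ∧ H = connectedComponentIn Lᶜ p ∪ L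

/-- The line `L` separates `A` from `B`: they lie in different closed halfplanes of `L`. -/
def LineSep (L A B : Set X) : Prop :=
  ∃ H₁ H₂ : Set X, IsHalfplane L H₁ ∧ IsHalfplane L H₂ ∧ H₁ ≠ H₂ ∧ A ⊆ H₁ ∧ B ⊆ H₂

/-- The shade `Sh_u(x,y)` of the segment `[x,y]` with respect to `u`. -/
def Shade (u x y : X) : Set X :=
  {p | (seg u p ∩ seg x y).Nonempty ∧
    ∃ L : Set X, IsGeodesicLine L ∧ u ∈ L ∧ p ∈ L ∧ LineSep L {x} {y}}

/-- The shade `St_u(x,y,z)` of the triangle `Δ(x,y,z)` with respect to `u`. -/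
def TriShade (u x y z : X) : Set X := Shade u x y ∪ Shade u y z ∪ Shade u z x

end Defs

section BusemannHelpers

variable {X : Type*} [MetricSpace X]

/-- Concatenation: if `z` lies metrically between `z1` and `z2`, there is a geodesic
from `z1` to `z2` passing through `z`. -/
lemma geo_concat (hG : IsGeodesicSpace X) {z1 z2 z : X}
    (hz : dist z1 z + dist z z2 = dist z1 z2) :
    ∃ σ : ℝ → X, IsGeodesicMap σ (dist z1 z2) ∧ σ 0 = z1 ∧ σ (dist z1 z2) = z2 ∧
      σ (dist z1 z) = z := by
  obtain ⟨σ₁, hσ₁, hσ₁0, hσ₁e⟩ := hG z1 z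
  obtain ⟨σ₂, hσ₂, hσ₂0, hσ₂e⟩ := hG z z2
  have h1 : (0:ℝ) ≤ dist z1 z := dist_nonneg
  have h2 : (0:ℝ) ≤ dist z z2 := dist_nonneg
  set d1 := dist z1 z with hd1
  set d2 := dist z z2 with hd2
  refine ⟨fun s => if s ≤ d1 then σ₁ s else σ₂ (s - d1), ?_, ?_, ?_, ?_⟩
  · -- geodesic map on [0, dist z1 z2]
    have key : ∀ s ∈ Set.Icc (0:ℝ) (dist z1 z2), ∀ t ∈ Set.Icc (0:ℝ) (dist z1 z2),
        s ≤ t → dist ((fun s => if s ≤ d1 then σ₁ s else σ₂ (s - d1)) s)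
          ((fun s => if s ≤ d1 then σ₁ s else σ₂ (s - d1)) t) = t - s := by
      intro s hs t ht hst
      rw [← hz] at hs ht
      simp only
      rcases le_or_gt t d1 with ht1 | ht1
      · have hs1 : s ≤ d1 := le_trans hst ht1
        rw [if_pos hs1, if_pos ht1, hσ₁ s ⟨hs.1, hs1⟩ t ⟨ht.1, ht1⟩,
          abs_of_nonpos (by linarith)]
        ring
      · rcases le_or_gt s d1 with hs1 | hs1
        · rw [if_pos hs1, if_neg (not_le.2 ht1)]
          have hA : dist (σ₁ s) z = d1 - s := by
            have h := hσ₁ s ⟨hs.1, hs1⟩ d1 ⟨h1, le_refl _⟩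
            rw [hσ₁e] at h
            rw [h, abs_of_nonpos (by linarith)]; ring
          have hB : dist z (σ₂ (t - d1)) = t - d1 := by
            have h := hσ₂ 0 ⟨le_refl _, h2⟩ (t - d1) ⟨by linarith, by linarith [ht.2]⟩
            rw [hσ₂0] at h
            rw [h, abs_of_nonpos (by linarith)]; ring
          have hup : dist (σ₁ s) (σ₂ (t - d1)) ≤ t - s := by
            calc dist (σ₁ s) (σ₂ (t - d1))
                ≤ dist (σ₁ s) z + dist z (σ₂ (t - d1)) := dist_triangle _ _ _
              _ = t - s := by rw [hA, hB]; ring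
          have hz1s : dist z1 (σ₁ s) = s := by
            have h := hσ₁ 0 ⟨le_refl _, h1⟩ s ⟨hs.1, hs1⟩
            rw [hσ₁0] at h
            rw [h, abs_of_nonpos (by linarith [hs.1])]; ring
          have hz2t : dist (σ₂ (t - d1)) z2 = d1 + d2 - t := by
            have h := hσ₂ (t - d1) ⟨by linarith, by linarith [ht.2]⟩ d2 ⟨h2, le_refl _⟩
            rw [hσ₂e] at h
            rw [h, abs_of_nonpos (by linarith [ht.2])]; ring
          have hlow : t - s ≤ dist (σ₁ s) (σ₂ (t - d1)) := by
            have h4 := dist_triangle4 z1 (σ₁ s) (σ₂ (t - d1)) z2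
            rw [hz1s, hz2t, ← hz] at h4
            linarith
          linarith [le_antisymm hup hlow]
        · rw [if_neg (not_le.2 hs1), if_neg (not_le.2 ht1),
            hσ₂ (s - d1) ⟨by linarith, by linarith [hs.2]⟩ (t - d1)
              ⟨by linarith, by linarith [ht.2]⟩,
            abs_of_nonpos (by linarith)]
          ring
    intro s hs t ht
    rcases le_total s t with hst | hst
    · rw [key s hs t ht hst, abs_of_nonpos (by linarith)]; ring
    · rw [dist_comm, key t ht s hs hst, abs_of_nonneg (by linarith)]
  · simp only [if_pos h1, hσ₁0]
  · rw [← hz]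
    simp only
    rcases lt_or_eq_of_le h2 with h2' | h2'
    · rw [if_neg (by push_neg; linarith)]
      have : d1 + d2 - d1 = d2 := by ring
      rw [this, hσ₂e]
    · have hz2 : z = z2 := eq_of_dist_eq_zero h2'.symm
      rw [if_pos (by linarith)]
      have : d1 + d2 = d1 := by rw [← h2']; ring
      rw [this, hσ₁e, hz2]
  · simp only [if_pos (le_refl d1), hσ₁e]

/-- Busemann comparison with a moving target on a fixed geodesic. -/
lemma busemann_move (hB : IsBusemannSpace X) {σ γ : ℝ → X} {D L u1 u2 τ : ℝ}
    (hD : 0 ≤ D) (hσ : IsGeodesicMap σ D) (hL : 0 ≤ L) (hγ : IsGeodesicMap γ L)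
    (hu1 : u1 ∈ Set.Icc 0 L) (hu2 : u2 ∈ Set.Icc 0 L) (hτ : τ ∈ Set.Icc (0:ℝ) 1) :
    dist (σ (τ * D)) (γ ((1 - τ) * u1 + τ * u2)) ≤
      (1 - τ) * dist (σ 0) (γ u1) + τ * dist (σ D) (γ u2) := by
  rcases le_total u1 u2 with hu | hu
  · have hγ' : IsGeodesicMap (fun s => γ (u1 + s)) (u2 - u1) := by
      intro s hs t ht
      have := hγ (u1 + s) ⟨by linarith [hs.1, hu1.1], by linarith [hs.2, hu2.2]⟩
        (u1 + t) ⟨by linarith [ht.1, hu1.1], by linarith [ht.2, hu2.2]⟩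
      rw [this]
      congr 1; ring
    have h := hB.2 σ (fun s => γ (u1 + s)) D (u2 - u1) hD (by linarith) hσ hγ' τ hτ
    have e1 : u1 + τ * (u2 - u1) = (1 - τ) * u1 + τ * u2 := by ring
    have e2 : u1 + 0 = u1 := by ring
    have e3 : u1 + (u2 - u1) = u2 := by ring
    rw [e1, e2, e3] at h
    exact h
  · have hγ' : IsGeodesicMap (fun s => γ (u1 - s)) (u1 - u2) := by
      intro s hs t ht
      have := hγ (u1 - s) ⟨by linarith [hs.2, hu2.1], by linarith [hs.1, hu1.2]⟩
        (u1 - t) ⟨by linarith [ht.2, hu2.1], by linarith [ht.1, hu1.2]⟩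
      rw [this]
      rw [show u1 - s - (u1 - t) = -(s - t) by ring, abs_neg]
    have h := hB.2 σ (fun s => γ (u1 - s)) D (u1 - u2) hD (by linarith) hσ hγ' τ hτ
    have e1 : u1 - τ * (u1 - u2) = (1 - τ) * u1 + τ * u2 := by ring
    have e2 : u1 - 0 = u1 := by ring
    have e3 : u1 - (u1 - u2) = u2 := by ring
    rw [e1, e2, e3] at h
    exact h

end BusemannHelpers


section QuadInvariant

variable {X : Type*} [MetricSpace X]

/-- The invariant set used in the proof of the quadrilateral covering theorem. -/
def quadInv (γ₁ γ₂ γ₃ γ₄ : ℝ → X) (L1 L2 L3 L4 : ℝ) : Set X :=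
  {z | ∃ a b c e : ℝ, 0 ≤ a ∧ 0 ≤ b ∧ 0 ≤ c ∧ 0 ≤ e ∧ a + b + c + e = 1 ∧
    dist z (γ₁ ((b + c) * L1)) ≤ c * L2 + e * L4 ∧
    dist z (γ₂ ((c + e) * L2)) ≤ a * L1 + e * L3 ∧
    dist z (γ₃ ((a + e) * L3)) ≤ a * L4 + b * L2 ∧
    dist z (γ₄ ((a + b) * L4)) ≤ b * L1 + c * L3}

set_option maxHeartbeats 2000000 in
lemma quadInv_convex (hB : IsBusemannSpace X) {γ₁ γ₂ γ₃ γ₄ : ℝ → X} {L1 L2 L3 L4 : ℝ}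
    (hL1 : 0 ≤ L1) (hL2 : 0 ≤ L2) (hL3 : 0 ≤ L3) (hL4 : 0 ≤ L4)
    (hγ₁ : IsGeodesicMap γ₁ L1) (hγ₂ : IsGeodesicMap γ₂ L2)
    (hγ₃ : IsGeodesicMap γ₃ L3) (hγ₄ : IsGeodesicMap γ₄ L4) :
    GConvex (quadInv γ₁ γ₂ γ₃ γ₄ L1 L2 L3 L4) := by
  rintro z1 ⟨a1, b1, c1, e1, ha1, hb1, hc1, he1, hsum1, h11, h12, h13, h14⟩
    z2 ⟨a2, b2, c2, e2, ha2, hb2, hc2, he2, hsum2, h21, h22, h23, h24⟩ z hzseg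
  have hzseg' : dist z1 z + dist z z2 = dist z1 z2 := hzseg
  rcases eq_or_lt_of_le (dist_nonneg : (0:ℝ) ≤ dist z1 z2) with hD0 | hD0
  · have hsum0 : dist z1 z + dist z z2 = 0 := by rw [hzseg']; exact hD0.symm
    have hz1z : dist z1 z = 0 := by
      have n1 := dist_nonneg (x := z1) (y := z)
      have n2 := dist_nonneg (x := z) (y := z2)
      linarith
    have hzz1 : z1 = z := eq_of_dist_eq_zero hz1z
    rw [← hzz1]
    exact ⟨a1, b1, c1, e1, ha1, hb1, hc1, he1, hsum1, h11, h12, h13, h14⟩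
  · obtain ⟨σ, hσ, hσ0, hσe, hσz⟩ := geo_concat hB.1 hzseg'
    have hτ0 : 0 ≤ dist z1 z / dist z1 z2 := div_nonneg dist_nonneg (le_of_lt hD0)
    have hτ1 : dist z1 z / dist z1 z2 ≤ 1 := by
      rw [div_le_one hD0]
      have := dist_nonneg (x := z) (y := z2)
      linarith
    set τ := dist z1 z / dist z1 z2 with hτdef
    have hτD : τ * dist z1 z2 = dist z1 z := by
      rw [hτdef]
      exact div_mul_cancel₀ _ (ne_of_gt hD0)
    have key : ∀ (γ : ℝ → X) (L f1 f2 B1 B2 : ℝ), IsGeodesicMap γ L → 0 ≤ L →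
        0 ≤ f1 → f1 ≤ 1 → 0 ≤ f2 → f2 ≤ 1 →
        dist z1 (γ (f1 * L)) ≤ B1 → dist z2 (γ (f2 * L)) ≤ B2 →
        dist z (γ (((1 - τ) * f1 + τ * f2) * L)) ≤ (1 - τ) * B1 + τ * B2 := by
      intro γ L f1 f2 B1 B2 hγ hL hf10 hf11 hf20 hf21 hB1 hB2
      have hu1 : f1 * L ∈ Set.Icc (0:ℝ) L :=
        ⟨mul_nonneg hf10 hL, by nlinarith⟩
      have hu2 : f2 * L ∈ Set.Icc (0:ℝ) L :=
        ⟨mul_nonneg hf20 hL, by nlinarith⟩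
      have hmove := busemann_move hB (le_of_lt hD0) hσ hL hγ hu1 hu2 ⟨hτ0, hτ1⟩
      rw [hτD, hσz, hσ0, hσe] at hmove
      rw [show (1 - τ) * (f1 * L) + τ * (f2 * L) = ((1 - τ) * f1 + τ * f2) * L from by ring]
        at hmove
      calc dist z (γ (((1 - τ) * f1 + τ * f2) * L))
          ≤ (1 - τ) * dist z1 (γ (f1 * L)) + τ * dist z2 (γ (f2 * L)) := hmove
        _ ≤ (1 - τ) * B1 + τ * B2 := by
            have h1 : (0:ℝ) ≤ 1 - τ := by linarith
            exact add_le_add (mul_le_mul_of_nonneg_left hB1 h1)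
              (mul_le_mul_of_nonneg_left hB2 hτ0)
    have h1τ : (0:ℝ) ≤ 1 - τ := by linarith
    refine ⟨(1 - τ) * a1 + τ * a2, (1 - τ) * b1 + τ * b2, (1 - τ) * c1 + τ * c2,
      (1 - τ) * e1 + τ * e2,
      add_nonneg (mul_nonneg h1τ ha1) (mul_nonneg hτ0 ha2),
      add_nonneg (mul_nonneg h1τ hb1) (mul_nonneg hτ0 hb2),
      add_nonneg (mul_nonneg h1τ hc1) (mul_nonneg hτ0 hc2),
      add_nonneg (mul_nonneg h1τ he1) (mul_nonneg hτ0 he2),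
      by nlinarith [hsum1, hsum2], ?_, ?_, ?_, ?_⟩
    · have hk := key γ₁ L1 (b1 + c1) (b2 + c2) (c1 * L2 + e1 * L4)
        (c2 * L2 + e2 * L4) hγ₁ hL1 (by linarith) (by linarith)
        (by linarith) (by linarith) h11 h21
      rw [show ((1 - τ) * (b1 + c1) + τ * (b2 + c2)) =
        ((1 - τ) * b1 + τ * b2 + ((1 - τ) * c1 + τ * c2)) from by ring] at hk
      calc dist z (γ₁ (((1 - τ) * b1 + τ * b2 + ((1 - τ) * c1 + τ * c2)) * L1))
          ≤ (1 - τ) * (c1 * L2 + e1 * L4) + τ * (c2 * L2 + e2 * L4) := hk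
        _ = ((1 - τ) * c1 + τ * c2) * L2 + ((1 - τ) * e1 + τ * e2) * L4 := by ring
    · have hk := key γ₂ L2 (c1 + e1) (c2 + e2) (a1 * L1 + e1 * L3)
        (a2 * L1 + e2 * L3) hγ₂ hL2 (by linarith) (by linarith)
        (by linarith) (by linarith) h12 h22
      rw [show ((1 - τ) * (c1 + e1) + τ * (c2 + e2)) =
        ((1 - τ) * c1 + τ * c2 + ((1 - τ) * e1 + τ * e2)) from by ring] at hk
      calc dist z (γ₂ (((1 - τ) * c1 + τ * c2 + ((1 - τ) * e1 + τ * e2)) * L2))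
          ≤ (1 - τ) * (a1 * L1 + e1 * L3) + τ * (a2 * L1 + e2 * L3) := hk
        _ = ((1 - τ) * a1 + τ * a2) * L1 + ((1 - τ) * e1 + τ * e2) * L3 := by ring
    · have hk := key γ₃ L3 (a1 + e1) (a2 + e2) (a1 * L4 + b1 * L2)
        (a2 * L4 + b2 * L2) hγ₃ hL3 (by linarith) (by linarith)
        (by linarith) (by linarith) h13 h23
      rw [show ((1 - τ) * (a1 + e1) + τ * (a2 + e2)) =
        ((1 - τ) * a1 + τ * a2 + ((1 - τ) * e1 + τ * e2)) from by ring] at hk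
      calc dist z (γ₃ (((1 - τ) * a1 + τ * a2 + ((1 - τ) * e1 + τ * e2)) * L3))
          ≤ (1 - τ) * (a1 * L4 + b1 * L2) + τ * (a2 * L4 + b2 * L2) := hk
        _ = ((1 - τ) * a1 + τ * a2) * L4 + ((1 - τ) * b1 + τ * b2) * L2 := by ring
    · have hk := key γ₄ L4 (a1 + b1) (a2 + b2) (b1 * L1 + c1 * L3)
        (b2 * L1 + c2 * L3) hγ₄ hL4 (by linarith) (by linarith)
        (by linarith) (by linarith) h14 h24
      rw [show ((1 - τ) * (a1 + b1) + τ * (a2 + b2)) =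
        ((1 - τ) * a1 + τ * a2 + ((1 - τ) * b1 + τ * b2)) from by ring] at hk
      calc dist z (γ₄ (((1 - τ) * a1 + τ * a2 + ((1 - τ) * b1 + τ * b2)) * L4))
          ≤ (1 - τ) * (b1 * L1 + c1 * L3) + τ * (b2 * L1 + c2 * L3) := hk
        _ = ((1 - τ) * b1 + τ * b2) * L1 + ((1 - τ) * c1 + τ * c2) * L3 := by ring

end QuadInvariant


set_option maxHeartbeats 4000000 in
/-- a convex quadrilateral with sides at most `2δ` is covered by
the four `δ`-balls centered at the midpoints of its sides. -/
theorem quadrilateral_cover_four_balls {X : Type*} [MetricSpace X]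
    (hX : IsBusemannSurface X) (δ : ℝ) (hδ : 0 < δ) (x x' w v p q r s : X)
    (hpos : x ∉ gHull {x', w, v} ∧ x' ∉ gHull {x, w, v} ∧
      w ∉ gHull {x, x', v} ∧ v ∉ gHull {x, x', w})
    (hxx' : dist x x' ≤ 2 * δ) (hx'w : dist x' w ≤ 2 * δ)
    (hwv : dist w v ≤ 2 * δ) (hvx : dist v x ≤ 2 * δ)
    (hp : dist x p = dist x x' / 2 ∧ dist p x' = dist x x' / 2)
    (hq : dist x' q = dist x' w / 2 ∧ dist q w = dist x' w / 2)
    (hr : dist w r = dist w v / 2 ∧ dist r v = dist w v / 2)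
    (hs : dist v s = dist v x / 2 ∧ dist s x = dist v x / 2) :
    gHull {x, x', w, v} ⊆
      Metric.closedBall p δ ∪ Metric.closedBall q δ ∪
      Metric.closedBall r δ ∪ Metric.closedBall s δ := by
  obtain ⟨hBus, -⟩ := hX
  have hGeo : IsGeodesicSpace X := hBus.1
  have hL1n : (0:ℝ) ≤ dist x x' := dist_nonneg
  have hL2n : (0:ℝ) ≤ dist x' w := dist_nonneg
  have hL3n : (0:ℝ) ≤ dist w v := dist_nonneg
  have hL4n : (0:ℝ) ≤ dist v x := dist_nonneg
  -- geodesics along the four sides, through the four midpoints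
  have hp' : dist x p + dist p x' = dist x x' := by rw [hp.1, hp.2]; ring
  have hq' : dist x' q + dist q w = dist x' w := by rw [hq.1, hq.2]; ring
  have hr' : dist w r + dist r v = dist w v := by rw [hr.1, hr.2]; ring
  have hs' : dist v s + dist s x = dist v x := by rw [hs.1, hs.2]; ring
  obtain ⟨γ₁, hγ₁, hγ₁0, hγ₁e, hγ₁m⟩ := geo_concat hGeo hp'
  obtain ⟨γ₂, hγ₂, hγ₂0, hγ₂e, hγ₂m⟩ := geo_concat hGeo hq'
  obtain ⟨γ₃, hγ₃, hγ₃0, hγ₃e, hγ₃m⟩ := geo_concat hGeo hr'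
  obtain ⟨γ₄, hγ₄, hγ₄0, hγ₄e, hγ₄m⟩ := geo_concat hGeo hs'
  have hpγ : γ₁ (dist x x' / 2) = p := by rw [← hp.1]; exact hγ₁m
  have hqγ : γ₂ (dist x' w / 2) = q := by rw [← hq.1]; exact hγ₂m
  have hrγ : γ₃ (dist w v / 2) = r := by rw [← hr.1]; exact hγ₃m
  have hsγ : γ₄ (dist v x / 2) = s := by rw [← hs.1]; exact hγ₄m
  -- the invariant set
  set C : Set X := quadInv γ₁ γ₂ γ₃ γ₄ (dist x x') (dist x' w) (dist w v) (dist v x)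
    with hCdef
  have hCconv : GConvex C := quadInv_convex hBus hL1n hL2n hL3n hL4n hγ₁ hγ₂ hγ₃ hγ₄
  have hCmem : ∀ z : X, z ∈ C ↔ ∃ a b c e : ℝ,
      0 ≤ a ∧ 0 ≤ b ∧ 0 ≤ c ∧ 0 ≤ e ∧ a + b + c + e = 1 ∧
      dist z (γ₁ ((b + c) * dist x x')) ≤ c * dist x' w + e * dist v x ∧
      dist z (γ₂ ((c + e) * dist x' w)) ≤ a * dist x x' + e * dist w v ∧
      dist z (γ₃ ((a + e) * dist w v)) ≤ a * dist v x + b * dist x' w ∧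
      dist z (γ₄ ((a + b) * dist v x)) ≤ b * dist x x' + c * dist w v := by
    intro z
    rw [hCdef]
    simp only [quadInv, Set.mem_setOf_eq]
  -- the four vertices belong to C
  have hxC : x ∈ C := by
    rw [hCmem]
    refine ⟨1, 0, 0, 0, by norm_num, by norm_num, by norm_num, by norm_num, by norm_num,
      ?_, ?_, ?_, ?_⟩
    · rw [show ((0:ℝ) + 0) * dist x x' = 0 from by ring, hγ₁0]
      simp
    · rw [show ((0:ℝ) + 0) * dist x' w = 0 from by ring, hγ₂0]
      rw [show (1:ℝ) * dist x x' + 0 * dist w v = dist x x' from by ring]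
    · rw [show ((1:ℝ) + 0) * dist w v = dist w v from by ring, hγ₃e]
      rw [show (1:ℝ) * dist v x + 0 * dist x' w = dist v x from by ring, dist_comm]
    · rw [show ((1:ℝ) + 0) * dist v x = dist v x from by ring, hγ₄e]
      simp
  have hx'C : x' ∈ C := by
    rw [hCmem]
    refine ⟨0, 1, 0, 0, by norm_num, by norm_num, by norm_num, by norm_num, by norm_num,
      ?_, ?_, ?_, ?_⟩
    · rw [show ((1:ℝ) + 0) * dist x x' = dist x x' from by ring, hγ₁e]
      simp
    · rw [show ((0:ℝ) + 0) * dist x' w = 0 from by ring, hγ₂0]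
      simp
    · rw [show ((0:ℝ) + 0) * dist w v = 0 from by ring, hγ₃0]
      rw [show (0:ℝ) * dist v x + 1 * dist x' w = dist x' w from by ring]
    · rw [show ((0:ℝ) + 1) * dist v x = dist v x from by ring, hγ₄e]
      rw [show (1:ℝ) * dist x x' + 0 * dist w v = dist x x' from by ring, dist_comm]
  have hwC : w ∈ C := by
    rw [hCmem]
    refine ⟨0, 0, 1, 0, by norm_num, by norm_num, by norm_num, by norm_num, by norm_num,
      ?_, ?_, ?_, ?_⟩
    · rw [show ((0:ℝ) + 1) * dist x x' = dist x x' from by ring, hγ₁e]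
      rw [show (1:ℝ) * dist x' w + 0 * dist v x = dist x' w from by ring, dist_comm]
    · rw [show ((1:ℝ) + 0) * dist x' w = dist x' w from by ring, hγ₂e]
      simp
    · rw [show ((0:ℝ) + 0) * dist w v = 0 from by ring, hγ₃0]
      simp
    · rw [show ((0:ℝ) + 0) * dist v x = 0 from by ring, hγ₄0]
      rw [show (0:ℝ) * dist x x' + 1 * dist w v = dist w v from by ring]
  have hvC : v ∈ C := by
    rw [hCmem]
    refine ⟨0, 0, 0, 1, by norm_num, by norm_num, by norm_num, by norm_num, by norm_num,
      ?_, ?_, ?_, ?_⟩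
    · rw [show ((0:ℝ) + 0) * dist x x' = 0 from by ring, hγ₁0]
      rw [show (0:ℝ) * dist x' w + 1 * dist v x = dist v x from by ring]
    · rw [show ((0:ℝ) + 1) * dist x' w = dist x' w from by ring, hγ₂e]
      rw [show (0:ℝ) * dist x x' + 1 * dist w v = dist w v from by ring, dist_comm]
    · rw [show ((0:ℝ) + 1) * dist w v = dist w v from by ring, hγ₃e]
      simp
    · rw [show ((0:ℝ) + 0) * dist v x = 0 from by ring, hγ₄0]
      simp
  -- the hull is contained in C
  have hsub : gHull {x, x', w, v} ⊆ C := by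
    intro z hz
    refine Set.mem_sInter.1 hz C ⟨hCconv, ?_⟩
    intro y hy
    simp only [Set.mem_insert_iff, Set.mem_singleton_iff] at hy
    rcases hy with rfl | rfl | rfl | rfl
    · exact hxC
    · exact hx'C
    · exact hwC
    · exact hvC
  -- final covering argument
  intro z hz
  obtain ⟨a, b, c, e, ha, hb, hc, he, hsum, h1, h2, h3, h4⟩ := (hCmem z).1 (hsub hz)
  have hmem : ∀ (L f : ℝ), 0 ≤ L → 0 ≤ f → f ≤ 1 → f * L ∈ Set.Icc (0:ℝ) L := by
    intro L f hL hf0 hf1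
    exact ⟨mul_nonneg hf0 hL, by nlinarith⟩
  have hhalf : ∀ L : ℝ, 0 ≤ L → L / 2 ∈ Set.Icc (0:ℝ) L := by
    intro L hL; constructor <;> linarith
  have ht1 : dist (γ₁ ((b + c) * dist x x')) p = |(b + c) * dist x x' - dist x x' / 2| := by
    rw [← hpγ]
    exact hγ₁ _ (hmem _ _ hL1n (by linarith) (by linarith)) _ (hhalf _ hL1n)
  have ht2 : dist (γ₂ ((c + e) * dist x' w)) q = |(c + e) * dist x' w - dist x' w / 2| := by
    rw [← hqγ]
    exact hγ₂ _ (hmem _ _ hL2n (by linarith) (by linarith)) _ (hhalf _ hL2n)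
  have ht3 : dist (γ₃ ((a + e) * dist w v)) r = |(a + e) * dist w v - dist w v / 2| := by
    rw [← hrγ]
    exact hγ₃ _ (hmem _ _ hL3n (by linarith) (by linarith)) _ (hhalf _ hL3n)
  have ht4 : dist (γ₄ ((a + b) * dist v x)) s = |(a + b) * dist v x - dist v x / 2| := by
    rw [← hsγ]
    exact hγ₄ _ (hmem _ _ hL4n (by linarith) (by linarith)) _ (hhalf _ hL4n)
  have htrip := dist_triangle z (γ₁ ((b + c) * dist x x')) p
  have htriq := dist_triangle z (γ₂ ((c + e) * dist x' w)) q
  have htrir := dist_triangle z (γ₃ ((a + e) * dist w v)) r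
  have htris := dist_triangle z (γ₄ ((a + b) * dist v x)) s
  rw [ht1] at htrip
  rw [ht2] at htriq
  rw [ht3] at htrir
  rw [ht4] at htris
  simp only [Set.mem_union, Metric.mem_closedBall]
  rcases le_total (a + b) (1/2 : ℝ) with hA | hA <;> rcases le_total (b + c) (1/2 : ℝ)
    with hB | hB
  · -- a+b ≤ 1/2 and b+c ≤ 1/2
    rcases le_total a c with hac | hac
    · -- use r
      have habs : |(a + e) * dist w v - dist w v / 2| = (a + e - 1/2) * dist w v := by
        rw [show (a + e) * dist w v - dist w v / 2 = (a + e - 1/2) * dist w v from by ring]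
        exact abs_of_nonneg (mul_nonneg (by linarith) hL3n)
      rw [habs] at htrir
      refine Or.inl (Or.inr ?_)
      nlinarith [h3, mul_nonneg ha (by linarith : (0:ℝ) ≤ 2 * δ - dist v x),
        mul_nonneg hb (by linarith : (0:ℝ) ≤ 2 * δ - dist x' w),
        mul_nonneg (show (0:ℝ) ≤ a + e - 1/2 by linarith)
          (by linarith : (0:ℝ) ≤ 2 * δ - dist w v),
        mul_nonneg (le_of_lt hδ) (show (0:ℝ) ≤ 1 - (2*a + b + e) by linarith)]
    · -- use s
      have habs : |(a + b) * dist v x - dist v x / 2| = (1/2 - a - b) * dist v x := by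
        rw [show (a + b) * dist v x - dist v x / 2 = -((1/2 - a - b) * dist v x) from by ring,
          abs_neg]
        exact abs_of_nonneg (mul_nonneg (by linarith) hL4n)
      rw [habs] at htris
      refine Or.inr ?_
      nlinarith [h4, mul_nonneg hb (by linarith : (0:ℝ) ≤ 2 * δ - dist x x'),
        mul_nonneg hc (by linarith : (0:ℝ) ≤ 2 * δ - dist w v),
        mul_nonneg (show (0:ℝ) ≤ 1/2 - a - b by linarith)
          (by linarith : (0:ℝ) ≤ 2 * δ - dist v x),
        mul_nonneg (le_of_lt hδ) (show (0:ℝ) ≤ 1 - (b + 2*c + e) by linarith)]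
  · -- a+b ≤ 1/2 ≤ b+c
    rcases le_total (b) (e) with hbe | hbe
    · -- A+B ≤ 1 : use r
      have habs : |(a + e) * dist w v - dist w v / 2| = (1/2 - a - e) * dist w v := by
        rw [show (a + e) * dist w v - dist w v / 2 = -((1/2 - a - e) * dist w v) from by ring,
          abs_neg]
        exact abs_of_nonneg (mul_nonneg (by linarith) hL3n)
      rw [habs] at htrir
      refine Or.inl (Or.inr ?_)
      nlinarith [h3, mul_nonneg ha (by linarith : (0:ℝ) ≤ 2 * δ - dist v x),
        mul_nonneg hb (by linarith : (0:ℝ) ≤ 2 * δ - dist x' w),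
        mul_nonneg (show (0:ℝ) ≤ 1/2 - a - e by linarith)
          (by linarith : (0:ℝ) ≤ 2 * δ - dist w v),
        mul_nonneg (le_of_lt hδ) (show (0:ℝ) ≤ 1 - (2*b + a + c) by linarith)]
    · -- A+B ≥ 1 : use q
      have habs : |(c + e) * dist x' w - dist x' w / 2| = (c + e - 1/2) * dist x' w := by
        rw [show (c + e) * dist x' w - dist x' w / 2 = (c + e - 1/2) * dist x' w from by ring]
        exact abs_of_nonneg (mul_nonneg (by linarith) hL2n)
      rw [habs] at htriq
      refine Or.inl (Or.inl (Or.inr ?_))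
      nlinarith [h2, mul_nonneg ha (by linarith : (0:ℝ) ≤ 2 * δ - dist x x'),
        mul_nonneg he (by linarith : (0:ℝ) ≤ 2 * δ - dist w v),
        mul_nonneg (show (0:ℝ) ≤ c + e - 1/2 by linarith)
          (by linarith : (0:ℝ) ≤ 2 * δ - dist x' w),
        mul_nonneg (le_of_lt hδ) (show (0:ℝ) ≤ 1 - (a + c + 2*e) by linarith)]
  · -- b+c ≤ 1/2 ≤ a+b
    rcases le_total b e with hbe | hbe
    · -- A+B ≤ 1 : use s
      have habs : |(a + b) * dist v x - dist v x / 2| = (a + b - 1/2) * dist v x := by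
        rw [show (a + b) * dist v x - dist v x / 2 = (a + b - 1/2) * dist v x from by ring]
        exact abs_of_nonneg (mul_nonneg (by linarith) hL4n)
      rw [habs] at htris
      refine Or.inr ?_
      nlinarith [h4, mul_nonneg hb (by linarith : (0:ℝ) ≤ 2 * δ - dist x x'),
        mul_nonneg hc (by linarith : (0:ℝ) ≤ 2 * δ - dist w v),
        mul_nonneg (show (0:ℝ) ≤ a + b - 1/2 by linarith)
          (by linarith : (0:ℝ) ≤ 2 * δ - dist v x),
        mul_nonneg (le_of_lt hδ) (show (0:ℝ) ≤ 1 - (a + 2*b + c) by linarith)]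
    · -- A+B ≥ 1 : use p
      have habs : |(b + c) * dist x x' - dist x x' / 2| = (1/2 - b - c) * dist x x' := by
        rw [show (b + c) * dist x x' - dist x x' / 2 = -((1/2 - b - c) * dist x x') from by
          ring, abs_neg]
        exact abs_of_nonneg (mul_nonneg (by linarith) hL1n)
      rw [habs] at htrip
      refine Or.inl (Or.inl (Or.inl ?_))
      nlinarith [h1, mul_nonneg hc (by linarith : (0:ℝ) ≤ 2 * δ - dist x' w),
        mul_nonneg he (by linarith : (0:ℝ) ≤ 2 * δ - dist v x),
        mul_nonneg (show (0:ℝ) ≤ 1/2 - b - c by linarith)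
          (by linarith : (0:ℝ) ≤ 2 * δ - dist x x'),
        mul_nonneg (le_of_lt hδ) (show (0:ℝ) ≤ 1 - (a + c + 2*e) by linarith)]
  · -- 1/2 ≤ a+b and 1/2 ≤ b+c
    rcases le_total a c with hac | hac
    · -- use q
      have habs : |(c + e) * dist x' w - dist x' w / 2| = (1/2 - c - e) * dist x' w := by
        rw [show (c + e) * dist x' w - dist x' w / 2 = -((1/2 - c - e) * dist x' w) from by
          ring, abs_neg]
        exact abs_of_nonneg (mul_nonneg (by linarith) hL2n)
      rw [habs] at htriq
      refine Or.inl (Or.inl (Or.inr ?_))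
      nlinarith [h2, mul_nonneg ha (by linarith : (0:ℝ) ≤ 2 * δ - dist x x'),
        mul_nonneg he (by linarith : (0:ℝ) ≤ 2 * δ - dist w v),
        mul_nonneg (show (0:ℝ) ≤ 1/2 - c - e by linarith)
          (by linarith : (0:ℝ) ≤ 2 * δ - dist x' w),
        mul_nonneg (le_of_lt hδ) (show (0:ℝ) ≤ 1 - (2*a + b + e) by linarith)]
    · -- use p
      have habs : |(b + c) * dist x x' - dist x x' / 2| = (b + c - 1/2) * dist x x' := by
        rw [show (b + c) * dist x x' - dist x x' / 2 = (b + c - 1/2) * dist x x' from by ring]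
        exact abs_of_nonneg (mul_nonneg (by linarith) hL1n)
      rw [habs] at htrip
      refine Or.inl (Or.inl (Or.inl ?_))
      nlinarith [h1, mul_nonneg hc (by linarith : (0:ℝ) ≤ 2 * δ - dist x' w),
        mul_nonneg he (by linarith : (0:ℝ) ≤ 2 * δ - dist v x),
        mul_nonneg (show (0:ℝ) ≤ b + c - 1/2 by linarith)
          (by linarith : (0:ℝ) ≤ 2 * δ - dist x x'),
        mul_nonneg (le_of_lt hδ) (show (0:ℝ) ≤ 1 - (b + 2*c + e) by linarith)]
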